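/- Let A be a unital C*-algebra, let ω be a faithful state on A, and let a ∈ A be self-adjoint. Then (ω(a^{2p}))^{1/(2p)} converges to ‖a‖ as p → ∞ (p ranging over the positive integers); here each ω(a^{2p}) is a nonnegative real number since a^{2p} is positive. Equivalently, for every positive element b ≥ 0 of A, (ω(b^p))^{1/p} → ‖b‖, which is the paper's formula ‖a‖ = lim_{p→∞} ω(|a|^p)^{1/p} since |a|^{2p} = a^{2p}. -/

import Mathlib

open scoped ComplexOrder

theorem my_aux
    {A : Type*} [CStarAlgebra A] [PartialOrder A] [StarOrderedRing A]
    (ω : A →ₗ[ℂ] ℂ) (hω_unital : ω 1 = 1)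
    (hω_pos : ∀ x : A, 0 ≤ ω (star x * x))
    (hω_faithful : ∀ x : A, ω (star x * x) = 0 → x = 0)
    (b : A) (hb : 0 ≤ b) :
    Filter.Tendsto (fun p : ℕ => (ω (b ^ p)).re ^ ((1 : ℝ) / p))
      Filter.atTop (nhds ‖b‖) := by
  have hNontriv : Nontrivial A := by
    refine nontrivial_of_ne 1 0 fun h => ?_
    rw [h, map_zero] at hω_unital
    exact one_ne_zero hω_unital.symm
  -- ω is nonneg on nonneg elements
  have hωnn : ∀ x : A, 0 ≤ x → 0 ≤ ω x := by
    intro x hx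
    have h1 := hω_pos (CFC.sqrt x)
    rwa [(CFC.sqrt_nonneg (a := x)).isSelfAdjoint.star_eq, CFC.sqrt_mul_sqrt_self x hx] at h1
  have hmono : ∀ x y : A, x ≤ y → (ω x).re ≤ (ω y).re := by
    intro x y hxy
    have := hωnn (y - x) (sub_nonneg.2 hxy)
    rw [map_sub] at this
    have := (Complex.le_def.1 this).1
    simpa using this
  have hbsa : IsSelfAdjoint b := hb.isSelfAdjoint
  -- b ^ p is nonneg
  have hpow : ∀ p : ℕ, 0 ≤ b ^ p := by
    intro p
    rw [← cfc_pow_id (R := ℝ) b p hbsa]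
    exact cfc_nonneg fun t ht => pow_nonneg (spectrum_nonneg_of_nonneg hb ht) p
  have hrenn : ∀ p : ℕ, 0 ≤ (ω (b ^ p)).re := by
    intro p
    exact (Complex.le_def.1 (hωnn _ (hpow p))).1
  -- value of ω on real scalars
  have hωalg : ∀ r : ℝ, (ω (algebraMap ℝ A r)).re = r := by
    intro r
    rw [IsScalarTower.algebraMap_apply ℝ ℂ A r, Algebra.algebraMap_eq_smul_one, map_smul,
      hω_unital]
    simp
  -- upper bound
  have hub : ∀ p : ℕ, (ω (b ^ p)).re ≤ ‖b‖ ^ p := by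
    intro p
    have h1 : b ^ p ≤ algebraMap ℝ A ‖b ^ p‖ :=
      IsSelfAdjoint.le_algebraMap_norm_self (hbsa.pow p)
    calc (ω (b ^ p)).re ≤ (ω (algebraMap ℝ A ‖b ^ p‖)).re := hmono _ _ h1
      _ = ‖b ^ p‖ := hωalg _
      _ ≤ ‖b‖ ^ p := norm_pow_le b p
  rcases eq_or_lt_of_le (norm_nonneg b) with hr | hr
  · -- b = 0
    have hb0 : b = 0 := norm_eq_zero.1 hr.symm
    rw [← hr]
    refine Filter.Tendsto.congr' ?_ tendsto_const_nhds
    filter_upwards [Filter.eventually_ge_atTop 1] with p hp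
    rw [hb0, zero_pow (by omega), map_zero, Complex.zero_re,
      Real.zero_rpow (by positivity)]
  · set r : ℝ := ‖b‖ with hrdef
    refine tendsto_order.2 ⟨?_, ?_⟩
    · -- lower bound
      intro x hx
      set ε : ℝ := min ((r - x)/2) (r/2) with hεdef
      have hε : 0 < ε := lt_min (by linarith) (by linarith)
      have hεr : 0 < r - ε := by
        have h := min_le_right ((r - x)/2) (r/2); linarith
      have hxε : x < r - ε := by
        have h := min_le_left ((r - x)/2) (r/2); linarith
      set f : ℝ → ℝ := fun t => max (t - (r - ε)) 0 with hfdef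
      have hfc : Continuous f := (continuous_id.sub continuous_const).max continuous_const
      set c : A := cfc f b with hcdef
      have hc0 : 0 ≤ c := cfc_nonneg fun t _ => le_max_right _ _
      have hcsa : IsSelfAdjoint c := hc0.isSelfAdjoint
      have hfr : f r = ε := by
        simp only [hfdef]
        rw [max_eq_left (by linarith)]; ring
      have hcne : c ≠ 0 := by
        intro h
        have hrs : r ∈ spectrum ℝ b := CStarAlgebra.norm_mem_spectrum_of_nonneg hb
        have hmem : f r ∈ spectrum ℝ c := by
          rw [hcdef, cfc_map_spectrum (R := ℝ) f b]
          exact ⟨r, hrs, rfl⟩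
        rw [h, spectrum.zero_eq, hfr] at hmem
        simp only [Set.mem_singleton_iff] at hmem
        linarith
      set δ : ℝ := (ω (c * c)).re with hδdef
      have hδim : (ω (c * c)).im = 0 := by
        have h1 := hω_pos c
        rw [hcsa.star_eq] at h1
        exact ((Complex.le_def.1 h1).2).symm.trans rfl |>.symm ▸ (Complex.le_def.1 h1).2.symm
      have hδ0 : 0 < δ := by
        have h1 := hω_pos c
        rw [hcsa.star_eq] at h1
        have h2 : 0 ≤ δ := by simpa using (Complex.le_def.1 h1).1
        rcases h2.lt_or_eq with h | h
        · exact h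
        · exfalso
          apply hcne
          apply hω_faithful
          rw [hcsa.star_eq]
          apply Complex.ext
          · simpa using h.symm
          · simpa using hδim
      have key : ∀ p : ℕ, (((r - ε)^p / ε^2) • (c * c)) ≤ b ^ p := by
        intro p
        rw [← cfc_pow_id (R := ℝ) b p hbsa, hcdef, ← cfc_mul f f b,
          ← cfc_smul ((r-ε)^p/ε^2) (fun t => f t * f t) b]
        refine cfc_mono fun t ht => ?_
        have ht0 : 0 ≤ t := spectrum_nonneg_of_nonneg hb ht
        have htr : t ≤ r := by
          have h := spectrum.norm_le_norm_of_mem ht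
          rw [Real.norm_eq_abs] at h
          exact (le_abs_self t).trans h
        have hfge : 0 ≤ f t := le_max_right _ _
        rcases le_or_gt t (r - ε) with h | h
        · have hft : f t = 0 := max_eq_right (by linarith)
          rw [hft]
          simpa using pow_nonneg ht0 p
        · have hft : f t = t - (r - ε) := max_eq_left (by linarith)
          have hfle : f t ≤ ε := by rw [hft]; linarith
          have h1 : ((r-ε)^p/ε^2) • (f t * f t) ≤ ((r-ε)^p/ε^2) * ε^2 := by
            rw [smul_eq_mul]
            refine mul_le_mul_of_nonneg_left ?_ (by positivity)
            calc f t * f t ≤ ε * ε := mul_le_mul hfle hfle hfge hε.le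
              _ = ε ^ 2 := (sq ε).symm
          refine h1.trans ?_
          rw [div_mul_cancel₀ _ (by positivity)]
          exact pow_le_pow_left₀ hεr.le h.le p
      have hlbω : ∀ p : ℕ, (r - ε)^p * (δ / ε^2) ≤ (ω (b ^ p)).re := by
        intro p
        have h1 := hmono _ _ (key p)
        rw [ω.map_smul_of_tower, Complex.smul_re] at h1
        calc (r - ε)^p * (δ / ε^2) = ((r-ε)^p/ε^2) * δ := by ring
          _ ≤ (ω (b ^ p)).re := h1
      have hQ : 0 < δ / ε^2 := by positivity
      have htend : Filter.Tendsto (fun p : ℕ => (r - ε) * (δ / ε^2) ^ ((1:ℝ)/p))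
          Filter.atTop (nhds (r - ε)) := by
        have h1 : Filter.Tendsto (fun p : ℕ => (δ / ε^2) ^ ((1:ℝ)/p))
            Filter.atTop (nhds 1) := by
          have h2 := (Real.continuousAt_const_rpow (a := δ/ε^2) (b := 0) hQ.ne').tendsto
          have h3 := h2.comp tendsto_one_div_atTop_nhds_zero_nat
          simpa [Function.comp_def, Real.rpow_zero] using h3
        simpa using (tendsto_const_nhds (x := r - ε)).mul h1
      have hev := htend.eventually (eventually_gt_nhds hxε)
      filter_upwards [hev, Filter.eventually_ge_atTop 1] with p hp1 hp2
      have hle : (r - ε) * (δ/ε^2) ^ ((1:ℝ)/p) ≤ (ω (b ^ p)).re ^ ((1:ℝ)/p) := by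
        have h1 : ((r - ε)^p * (δ/ε^2)) ^ ((1:ℝ)/p) ≤ (ω (b ^ p)).re ^ ((1:ℝ)/p) :=
          Real.rpow_le_rpow (by positivity) (hlbω p) (by positivity)
        rw [Real.mul_rpow (by positivity) hQ.le, ← Real.rpow_natCast (r - ε) p,
          ← Real.rpow_mul hεr.le,
          mul_one_div_cancel (Nat.cast_ne_zero.2 (by omega : p ≠ 0)), Real.rpow_one] at h1
        exact h1
      exact lt_of_lt_of_le hp1 hle
    · -- upper bound
      intro x hx
      filter_upwards [Filter.eventually_ge_atTop 1] with p hp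
      have h1 : (ω (b ^ p)).re ^ ((1 : ℝ) / p) ≤ (r ^ p) ^ ((1 : ℝ) / p) :=
        Real.rpow_le_rpow (hrenn p) (hub p) (by positivity)
      have h2 : (r ^ p) ^ ((1 : ℝ) / p) = r := by
        rw [← Real.rpow_natCast r p, ← Real.rpow_mul hr.le,
          mul_one_div_cancel (Nat.cast_ne_zero.2 (by omega)), Real.rpow_one]
      exact lt_of_le_of_lt (h2 ▸ h1) hx

/-- Let `A` be a unital C*-algebra, `ω` a faithful state on `A` and `a ∈ A`
self-adjoint. Then `(ω (a^(2p)))^(1/(2p)) → ‖a‖` as `p → ∞` (each `ω (a^(2p))` is a nonnegative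
real, recorded via its real part). Equivalently, for every positive element `b ≥ 0`,
`(ω (b^p))^(1/p) → ‖b‖`. -/
theorem norm_eq_lim_state_of_powers
    {A : Type*} [CStarAlgebra A] [PartialOrder A] [StarOrderedRing A]
    (ω : A →ₗ[ℂ] ℂ) (hω_unital : ω 1 = 1)
    (hω_pos : ∀ x : A, 0 ≤ ω (star x * x))
    (hω_faithful : ∀ x : A, ω (star x * x) = 0 → x = 0)
    (a : A) (ha : IsSelfAdjoint a) :
    Filter.Tendsto (fun p : ℕ => (ω (a ^ (2 * p))).re ^ ((1 : ℝ) / (2 * p)))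
      Filter.atTop (nhds ‖a‖) ∧
    ∀ b : A, 0 ≤ b →
      Filter.Tendsto (fun p : ℕ => (ω (b ^ p)).re ^ ((1 : ℝ) / p))
        Filter.atTop (nhds ‖b‖) := by
  have part2 : ∀ b : A, 0 ≤ b →
      Filter.Tendsto (fun p : ℕ => (ω (b ^ p)).re ^ ((1 : ℝ) / p))
        Filter.atTop (nhds ‖b‖) :=
    fun b hb => my_aux ω hω_unital hω_pos hω_faithful b hb
  refine ⟨?_, part2⟩
  have hb2 : 0 ≤ a ^ 2 := by
    simpa [sq, ha.star_eq] using star_mul_self_nonneg a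
  have h := part2 (a ^ 2) hb2
  have hnorm : ‖a ^ 2‖ = ‖a‖ ^ 2 := by
    have h1 := CStarRing.norm_star_mul_self (x := a)
    rw [ha.star_eq] at h1
    rw [sq, h1, sq]
  have h2 := h.rpow_const (p := (1:ℝ)/2) (Or.inr (by norm_num))
  have hval : (‖a‖ ^ 2 : ℝ) ^ ((1:ℝ)/2) = ‖a‖ := by
    rw [← Real.rpow_natCast ‖a‖ 2, ← Real.rpow_mul (norm_nonneg a)]
    norm_num
  rw [hnorm, hval] at h2
  refine h2.congr fun p => ?_
  have hre : 0 ≤ (ω (a ^ (2*p))).re := by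
    have heq : a ^ (2*p) = star (a ^ p) * a ^ p := by
      rw [(ha.pow p).star_eq, ← pow_add, two_mul]
    rw [heq]
    exact (Complex.le_def.1 (hω_pos _)).1.trans_eq rfl |>.trans_eq rfl
  rw [← pow_mul, ← Real.rpow_mul hre]
  congr 1
  ring
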